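/- Let Δ > 0, C > 0, k ≥ 1, and ε > 0, and let Z : ℕ⁺ → ℕ⁺ → ℝ satisfy |Z i j| < Δ/(ζ(3)·i³·j³) for all i, j ≥ 1. If (k+1)² ≥ e·Δ/(2·ζ(3)·ε) and (k+1)³ ≥ Δ/ε, then the complement of the k-truncation of Z (the matrix equal to Z at entries (i,j) with max(i,j) > k and 0 otherwise) has induced infinity norm less than ε. -/

import Mathlib

/-- The Riemann zeta value ζ(3) = ∑_{n=1}^∞ 1/n³. -/
noncomputable def zeta3 : ℝ := ∑' n : ℕ+, 1 / (n : ℝ) ^ 3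

lemma tail_bound (k : ℕ) (hk : 1 ≤ k) :
    ∑' j : ℕ+, (if (j:ℕ) ≤ k then (0:ℝ) else 1 / (j:ℝ)^3)
      ≤ 1 / (2*(k:ℝ)*((k:ℝ)+1)) := by
  have heq : ∑' j : ℕ+, (if (j:ℕ) ≤ k then (0:ℝ) else 1 / (j:ℝ)^3)
      = ∑' n : ℕ, (if n+1 ≤ k then (0:ℝ) else 1/((n:ℝ)+1)^3) := by
    rw [← Equiv.tsum_eq Equiv.pnatEquivNat.symm]
    refine tsum_congr fun n => ?_
    have h1 : ((Equiv.pnatEquivNat.symm n : ℕ+) : ℕ) = n + 1 := by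
      simp [Equiv.pnatEquivNat]
    rw [h1]
    push_cast
    ring_nf
  rw [heq]
  set g : ℕ → ℝ := fun i => 1/(2*((max i k : ℕ):ℝ)*(((max i k : ℕ):ℝ)+1)) with hg
  have hg0 : g 0 = 1/(2*(k:ℝ)*((k:ℝ)+1)) := by
    simp [hg, Nat.max_eq_right (Nat.zero_le k)]
  have hgnn : ∀ n, 0 ≤ g n := by
    intro n; simp only [hg]; positivity
  have step : ∀ i : ℕ, (if i+1 ≤ k then (0:ℝ) else 1/((i:ℝ)+1)^3) ≤ g i - g (i+1) := by
    intro i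
    by_cases hik : i + 1 ≤ k
    · have h1 : max i k = k := Nat.max_eq_right (by omega)
      have h2 : max (i+1) k = k := Nat.max_eq_right hik
      simp only [hg, h1, h2, if_pos hik, sub_self, le_refl]
    · have hki : k ≤ i := by omega
      have h1 : max i k = i := Nat.max_eq_left hki
      have h2 : max (i+1) k = i+1 := Nat.max_eq_left (by omega)
      have hx1 : (1:ℝ) ≤ (i:ℝ) := by exact_mod_cast hk.trans hki
      simp only [hg, h1, h2, if_neg hik]
      push_cast
      have key : 1/((i:ℝ)+1)^3 ≤ 1/((i:ℝ)*((i:ℝ)+1)*((i:ℝ)+2)) := by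
        apply one_div_le_one_div_of_le
        · positivity
        · nlinarith
      refine key.trans (le_of_eq ?_)
      field_simp
      ring
  apply Real.tsum_le_of_sum_range_le
  · intro n; split_ifs <;> positivity
  · intro n
    calc ∑ i ∈ Finset.range n, (if i+1 ≤ k then (0:ℝ) else 1/((i:ℝ)+1)^3)
        ≤ ∑ i ∈ Finset.range n, (g i - g (i+1)) :=
          Finset.sum_le_sum (fun i _ => step i)
      _ = g 0 - g n := Finset.sum_range_sub' g n
      _ ≤ g 0 := by linarith [hgnn n]
      _ = _ := hg0

lemma pnat_summable_cube : Summable (fun j : ℕ+ => 1 / (j:ℝ)^3) := by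
  have h : Summable (fun n : ℕ => 1 / (n:ℝ)^3) := by
    simpa using Real.summable_one_div_nat_pow.mpr (by norm_num : 1 < 3)
  have := h.comp_injective (fun a b h => PNat.coe_injective h :
    Function.Injective (fun j : ℕ+ => (j:ℕ)))
  simpa [Function.comp_def] using this

lemma one_le_zeta3 : (1:ℝ) ≤ zeta3 := by
  have h := pnat_summable_cube
  have := h.le_tsum 1 (fun j _ => by positivity)
  simpa [zeta3] using this


/-- If `|Z i j| < Δ/(ζ(3)·i³·j³)` for all `i, j ≥ 1`, `(k+1)² ≥ e·Δ/(2·ζ(3)·ε)` and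
`(k+1)³ ≥ Δ/ε`, then the complement of the `k`-truncation of `Z` has induced infinity norm
less than `ε`. -/
theorem stmt_5 (Δ C ε : ℝ) (hΔ : 0 < Δ) (hC : 0 < C) (hε : 0 < ε)
    (k : ℕ) (hk : 1 ≤ k) (Z : ℕ+ → ℕ+ → ℝ)
    (hZ : ∀ i j : ℕ+, |Z i j| < Δ / (zeta3 * (i : ℝ) ^ 3 * (j : ℝ) ^ 3))
    (hk2 : ((k : ℝ) + 1) ^ 2 ≥ Real.exp 1 * Δ / (2 * zeta3 * ε))
    (hk3 : ((k : ℝ) + 1) ^ 3 ≥ Δ / ε) :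
    (⨆ i : ℕ+, ∑' j : ℕ+, |if (i : ℕ) ≤ k ∧ (j : ℕ) ≤ k then (0 : ℝ) else Z i j|) < ε := by
  have hs3 := pnat_summable_cube
  have hz1 : (1:ℝ) ≤ zeta3 := one_le_zeta3
  have hz0 : (0:ℝ) < zeta3 := lt_of_lt_of_le one_pos hz1
  have he : (2:ℝ) < Real.exp 1 := by
    have := Real.exp_one_gt_d9; linarith
  have he0 : (0:ℝ) < Real.exp 1 := Real.exp_pos 1
  set f : ℕ+ → ℕ+ → ℝ :=
    fun i j => |if (i : ℕ) ≤ k ∧ (j : ℕ) ≤ k then (0 : ℝ) else Z i j| with hfdef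
  show (⨆ i : ℕ+, ∑' j : ℕ+, f i j) < ε
  have hcpos : ∀ j : ℕ+, (0:ℝ) < (j:ℝ)^3 := fun j => by
    have : (0:ℝ) < (j:ℝ) := by exact_mod_cast j.pos
    positivity
  have hone_le : ∀ j : ℕ+, (1:ℝ) ≤ (j:ℝ)^3 := fun j => by
    have h1 : (1:ℝ) ≤ (j:ℝ) := by exact_mod_cast j.one_le
    calc (1:ℝ) = 1^3 := by norm_num
      _ ≤ (j:ℝ)^3 := by gcongr <;> norm_num
  have hbound : ∀ i j : ℕ+, f i j ≤ Δ/(zeta3 * (i:ℝ)^3) * (1/(j:ℝ)^3) := by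
    intro i j
    have h1 : Δ/(zeta3*(i:ℝ)^3) * (1/(j:ℝ)^3) = Δ/(zeta3*(i:ℝ)^3*(j:ℝ)^3) := by
      rw [div_mul_div_comm, mul_one]
    rw [h1]
    simp only [hfdef]
    split_ifs with h
    · simp only [abs_zero]
      positivity
    · exact (hZ i j).le
  have hsummB : ∀ i : ℕ+, Summable (fun j : ℕ+ => Δ/(zeta3*(i:ℝ)^3) * (1/(j:ℝ)^3)) :=
    fun i => hs3.mul_left _
  have hsumm : ∀ i, Summable (f i) := fun i =>
    Summable.of_nonneg_of_le (fun j => abs_nonneg _) (hbound i) (hsummB i)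
  have hBsum : ∀ i : ℕ+, ∑' j : ℕ+, Δ/(zeta3*(i:ℝ)^3) * (1/(j:ℝ)^3) = Δ/(i:ℝ)^3 := by
    intro i
    rw [tsum_mul_left]
    rw [show (∑' j : ℕ+, 1/(j:ℝ)^3) = zeta3 from rfl]
    have h2 := (hcpos i).ne'
    field_simp
  have hrow_le : ∀ i : ℕ+, ∑' j, f i j ≤ Δ/(i:ℝ)^3 := fun i =>
    (Summable.tsum_le_tsum (hbound i) (hsumm i) (hsummB i)).trans (le_of_eq (hBsum i))
  have hΔk1 : Δ/((k:ℝ)+1)^3 ≤ ε := by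
    rw [div_le_iff₀ (by positivity)]
    rw [ge_iff_le, div_le_iff₀ hε] at hk3
    linarith
  -- the special row i = k+1
  set pk : ℕ+ := ⟨k+1, Nat.succ_pos k⟩ with hpk
  have hpkc : ((pk:ℕ):ℝ) = (k:ℝ)+1 := by simp [hpk]
  have hrow_pk : ∑' j, f pk j < Δ/((k:ℝ)+1)^3 := by
    have hnk : ¬((pk:ℕ) ≤ k ∧ ((1:ℕ+):ℕ) ≤ k) := by
      simp [hpk]
    have hlt : f pk 1 < Δ/(zeta3*(pk:ℝ)^3) * (1/((1:ℕ+):ℝ)^3) := by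
      simp only [hfdef, if_neg hnk]
      have h := hZ pk 1
      rw [div_mul_div_comm, mul_one]
      simpa using h
    have h := Summable.tsum_lt_tsum (hbound pk) hlt (hsumm pk) (hsummB pk)
    rw [hBsum pk] at h
    rwa [hpkc] at h
  -- rows with i ≤ k
  have hT : Summable (fun j : ℕ+ => if (j:ℕ) ≤ k then (0:ℝ) else 1/(j:ℝ)^3) := by
    apply Summable.of_nonneg_of_le _ _ hs3
    · intro j; split_ifs <;> positivity
    · intro j; split_ifs
      · positivity
      · exact le_rfl
  have hrowA : ∀ i : ℕ+, (i:ℕ) ≤ k →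
      ∑' j, f i j ≤ Δ/zeta3 * (1/(2*(k:ℝ)*((k:ℝ)+1))) := by
    intro i hi
    have hb2 : ∀ j : ℕ+, f i j ≤
        Δ/zeta3 * (if (j:ℕ) ≤ k then (0:ℝ) else 1/(j:ℝ)^3) := by
      intro j
      by_cases hj : (j:ℕ) ≤ k
      · simp [hfdef, hi, hj]
      · rw [if_neg hj]
        refine (hbound i j).trans ?_
        rw [div_mul_div_comm, mul_one, div_mul_div_comm, mul_one]
        gcongr
        nlinarith [hone_le i, hcpos j]
    calc ∑' j, f i j ≤ ∑' j : ℕ+, Δ/zeta3 * (if (j:ℕ) ≤ k then (0:ℝ) else 1/(j:ℝ)^3) :=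
          Summable.tsum_le_tsum hb2 (hsumm i) (hT.mul_left _)
      _ = Δ/zeta3 * ∑' j : ℕ+, (if (j:ℕ) ≤ k then (0:ℝ) else 1/(j:ℝ)^3) := tsum_mul_left
      _ ≤ Δ/zeta3 * (1/(2*(k:ℝ)*((k:ℝ)+1))) :=
          mul_le_mul_of_nonneg_left (tail_bound k hk) (by positivity)
  -- assemble
  have hk1R : (1:ℝ) ≤ (k:ℝ) := by exact_mod_cast hk
  set b : ℝ := max (∑' j, f pk j)
      (max (Δ/zeta3 * (1/(2*(k:ℝ)*((k:ℝ)+1)))) (Δ/((k:ℝ)+2)^3)) with hb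
  have hsup : (⨆ i : ℕ+, ∑' j, f i j) ≤ b := by
    apply ciSup_le
    intro i
    rcases le_or_gt (i:ℕ) k with hik | hik
    · exact (hrowA i hik).trans (le_max_of_le_right (le_max_left _ _))
    · by_cases hi1 : (i:ℕ) = k+1
      · have : i = pk := PNat.coe_injective (by simp [hpk, hi1])
        rw [this]; exact le_max_left _ _
      · have hi2 : (k:ℝ)+2 ≤ (i:ℝ) := by
          have : k+2 ≤ (i:ℕ) := by omega
          exact_mod_cast this
        have h3 : ∑' j, f i j ≤ Δ/((k:ℝ)+2)^3 := by
          refine (hrow_le i).trans ?_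
          gcongr
          all_goals linarith
        exact h3.trans (le_max_of_le_right (le_max_right _ _))
  have hbε : b < ε := by
    rw [hb]
    apply max_lt
    · exact hrow_pk.trans_le hΔk1
    apply max_lt
    · have hk2' : Real.exp 1 * Δ ≤ 2*zeta3*ε*((k:ℝ)+1)^2 := by
        rw [ge_iff_le, div_le_iff₀ (by positivity)] at hk2
        linarith
      have h1 : Δ/zeta3 * (1/(2*(k:ℝ)*((k:ℝ)+1))) ≤ Δ/(zeta3*((k:ℝ)+1)^2) := by
        rw [div_mul_div_comm, mul_one]
        gcongr
        · nlinarith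
      have h2 : Δ/(zeta3*((k:ℝ)+1)^2) ≤ 2/Real.exp 1 * ε := by
        rw [div_le_iff₀ (by positivity),
          show 2/Real.exp 1 * ε * (zeta3*((k:ℝ)+1)^2)
            = (2*zeta3*ε*((k:ℝ)+1)^2)/Real.exp 1 by ring,
          le_div_iff₀ he0]
        linarith
      have h3 : 2/Real.exp 1 * ε < ε := by
        have h4 : 2/Real.exp 1 < 1 := (div_lt_one he0).mpr he
        nlinarith
      linarith
    · calc Δ/((k:ℝ)+2)^3 < Δ/((k:ℝ)+1)^3 := by
            apply div_lt_div_of_pos_left hΔ (by positivity)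
            nlinarith
        _ ≤ ε := hΔk1
  exact lt_of_le_of_lt hsup hbε
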